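/- (Theorem 3) Let α, β ∈ ℂ with α ≠ 0 and β ≠ 0, let 𝔻 be a two-mode displacement operator with parameters (−α/2, −β/2), and let φ ∈ ℓ²(ℕ×ℕ, ℂ) with ‖φ‖ = 1 satisfy: (i) Ω₁ φ = φ; (ii) Ω₂ φ = φ; (iii) (𝔻 φ)(n,m) = 0 for all (n,m) with n+m even (i.e. φ is fixed by the displaced odd-parity projection 𝔻⁻¹ ∘ P_odd ∘ 𝔻). Then there exists c ∈ ℂ with |c| = 1 such that φ = c • ψ^{ECS(−)}_{α,β}, where ψ^{ECS(−)}_{α,β} = (2(1 − exp(−(|α|²+|β|²)/2)))^{−1/2} • (coh α ⊠ coh 0 − coh 0 ⊠ coh β). -/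

import Mathlib

open scoped ComplexConjugate ENNReal

/-- The components of the coherent state `|α⟩`: `exp(−|α|²/2)·αⁿ/√(n!)`. -/
noncomputable def cohFun (α : ℂ) : ℕ → ℂ := fun n =>
  (Real.exp (-‖α‖ ^ 2 / 2) / Real.sqrt (Nat.factorial n) : ℝ) * α ^ n

lemma cohFun_memℓp (α : ℂ) : Memℓp (cohFun α) 2 := by
  apply memℓp_gen
  have h : Summable (fun n : ℕ =>
      Real.exp (-‖α‖ ^ 2 / 2) ^ 2 * ((‖α‖ ^ 2) ^ n / (Nat.factorial n))) :=
    (Real.summable_pow_div_factorial (‖α‖ ^ 2)).mul_left _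
  refine h.congr fun n => ?_
  have h2 : ((2 : ℝ≥0∞).toReal) = (2 : ℝ) := by norm_num
  rw [h2, Real.rpow_two]
  have hn : ‖cohFun α n‖ = Real.exp (-‖α‖ ^ 2 / 2) / Real.sqrt (Nat.factorial n) * ‖α‖ ^ n := by
    simp only [cohFun, norm_mul, norm_pow, Complex.norm_real, Real.norm_eq_abs]
    rw [abs_of_pos (by positivity)]
  rw [hn, mul_pow, div_pow, Real.sq_sqrt (by positivity), pow_right_comm]
  ring

/-- The coherent state `|α⟩` as an element of `ℓ²(ℕ, ℂ)`. -/
noncomputable def coh (α : ℂ) : lp (fun _ : ℕ => ℂ) 2 := ⟨cohFun α, cohFun_memℓp α⟩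

/-- The product state `ψ ⊠ χ` in the two-mode space `ℓ²(ℕ×ℕ, ℂ)`,
with components `(ψ ⊠ χ)(n, m) = ψ n · χ m`. -/
noncomputable def tmul (ψ χ : lp (fun _ : ℕ => ℂ) 2) : lp (fun _ : ℕ × ℕ => ℂ) 2 :=
  ⟨fun q => ψ q.1 * χ q.2, by
    apply memℓp_gen
    have hψ := (lp.memℓp ψ).summable (p := 2) (by norm_num)
    have hχ := (lp.memℓp χ).summable (p := 2) (by norm_num)
    refine (hψ.mul_of_nonneg hχ (fun n => Real.rpow_nonneg (norm_nonneg _) _)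
      (fun n => Real.rpow_nonneg (norm_nonneg _) _)).congr fun q => ?_
    rw [norm_mul, Real.mul_rpow (norm_nonneg _) (norm_nonneg _)]⟩

section Aux

open scoped ComplexConjugate ENNReal

@[simp] lemma coh_apply (γ : ℂ) (n : ℕ) : (coh γ : ∀ _ : ℕ, ℂ) n = cohFun γ n := rfl

@[simp] lemma tmul_apply (ψ χ : lp (fun _ : ℕ => ℂ) 2) (q : ℕ × ℕ) :
    (tmul ψ χ : ∀ _ : ℕ × ℕ, ℂ) q = ψ q.1 * χ q.2 := rfl

lemma cohFun_zero_apply (γ : ℂ) : cohFun γ 0 = ((Real.exp (-‖γ‖ ^ 2 / 2) : ℝ) : ℂ) := by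
  simp [cohFun]

lemma cohFun_zero (n : ℕ) : cohFun 0 n = if n = 0 then 1 else 0 := by
  cases n <;> simp [cohFun]

lemma cohFun_ne_zero {γ : ℂ} (hγ : γ ≠ 0) (n : ℕ) : cohFun γ n ≠ 0 := by
  apply mul_ne_zero
  · have h0 : (0:ℝ) < Real.exp (-‖γ‖ ^ 2 / 2) / Real.sqrt (Nat.factorial n) := by
      have : (0:ℝ) < Real.sqrt (Nat.factorial n) := Real.sqrt_pos.mpr (by positivity)
      positivity
    exact_mod_cast ne_of_gt h0
  · exact pow_ne_zero _ hγ

lemma norm_cohFun_sq (γ : ℂ) (n : ℕ) :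
    ‖cohFun γ n‖ ^ (2:ℝ) = Real.exp (-(‖γ‖ ^ 2)) * ((‖γ‖ ^ 2) ^ n / (Nat.factorial n)) := by
  rw [Real.rpow_two]
  have hn : ‖cohFun γ n‖ = Real.exp (-‖γ‖ ^ 2 / 2) / Real.sqrt (Nat.factorial n) * ‖γ‖ ^ n := by
    simp only [cohFun, norm_mul, norm_pow, Complex.norm_real, Real.norm_eq_abs]
    rw [abs_of_pos (by positivity)]
  rw [hn, mul_pow, div_pow, Real.sq_sqrt (by positivity), pow_right_comm]
  have he : Real.exp (-‖γ‖ ^ 2 / 2) ^ 2 = Real.exp (-(‖γ‖ ^ 2)) := by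
    rw [sq, ← Real.exp_add]; ring_nf
  rw [he]; ring

lemma tsum_norm_cohFun_sq (γ : ℂ) : ∑' n : ℕ, ‖cohFun γ n‖ ^ (2:ℝ) = 1 := by
  calc ∑' n : ℕ, ‖cohFun γ n‖ ^ (2:ℝ)
      = ∑' n : ℕ, Real.exp (-(‖γ‖ ^ 2)) * ((‖γ‖ ^ 2) ^ n / (Nat.factorial n)) :=
        tsum_congr (norm_cohFun_sq γ)
    _ = Real.exp (-(‖γ‖ ^ 2)) * ∑' n : ℕ, (‖γ‖ ^ 2) ^ n / (Nat.factorial n) := tsum_mul_left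
    _ = Real.exp (-(‖γ‖ ^ 2)) * Real.exp (‖γ‖ ^ 2) := by
        rw [Real.exp_eq_exp_ℝ, NormedSpace.exp_eq_tsum_div]
    _ = 1 := by rw [← Real.exp_add]; simp

lemma lp_norm_eq_one {ι : Type*} (f : lp (fun _ : ι => ℂ) 2)
    (h : ∑' i : ι, ‖f i‖ ^ (2:ℝ) = 1) : ‖f‖ = 1 := by
  have h2 := lp.norm_rpow_eq_tsum (p := 2) (E := fun _ : ι => ℂ) (by norm_num) f
  simp only [ENNReal.toReal_ofNat] at h2
  rw [h] at h2
  calc ‖f‖ = Real.sqrt (‖f‖ ^ 2) := (Real.sqrt_sq (norm_nonneg f)).symm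
    _ = 1 := by rw [← Real.rpow_two, h2, Real.sqrt_one]

lemma norm_coh (γ : ℂ) : ‖coh γ‖ = 1 :=
  lp_norm_eq_one _ (by simpa using tsum_norm_cohFun_sq γ)

lemma norm_tmul_coh_right (γ : ℂ) : ‖tmul (coh γ) (coh 0)‖ = 1 := by
  apply lp_norm_eq_one
  have hcollapse : ∑' q : ℕ × ℕ, ‖(tmul (coh γ) (coh 0)) q‖ ^ (2:ℝ)
      = ∑' n : ℕ, ‖(tmul (coh γ) (coh 0)) (n, 0)‖ ^ (2:ℝ) := by
    refine (Function.Injective.tsum_eq (g := fun n : ℕ => ((n, 0) : ℕ × ℕ)) ?_ ?_).symm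
    · intro x y hxy; simpa using congrArg Prod.fst hxy
    · intro q hq
      rcases q with ⟨n, m⟩
      rcases Nat.eq_zero_or_pos m with hm | hm
      · exact ⟨n, by simp [hm]⟩
      · exfalso
        apply hq
        have h0 : cohFun 0 m = 0 := by
          rw [cohFun_zero, if_neg (Nat.pos_iff_ne_zero.mp hm)]
        simp [tmul_apply, h0, Real.zero_rpow]
  rw [hcollapse, ← tsum_norm_cohFun_sq γ]
  refine tsum_congr fun n => ?_
  simp [cohFun_zero]

lemma norm_tmul_coh_left (γ : ℂ) : ‖tmul (coh 0) (coh γ)‖ = 1 := by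
  apply lp_norm_eq_one
  have hcollapse : ∑' q : ℕ × ℕ, ‖(tmul (coh 0) (coh γ)) q‖ ^ (2:ℝ)
      = ∑' m : ℕ, ‖(tmul (coh 0) (coh γ)) (0, m)‖ ^ (2:ℝ) := by
    refine (Function.Injective.tsum_eq (g := fun m : ℕ => ((0, m) : ℕ × ℕ)) ?_ ?_).symm
    · intro x y hxy; simpa using congrArg Prod.snd hxy
    · intro q hq
      rcases q with ⟨n, m⟩
      rcases Nat.eq_zero_or_pos n with hn | hn
      · exact ⟨m, by simp [hn]⟩
      · exfalso
        apply hq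
        have h0 : cohFun 0 n = 0 := by
          rw [cohFun_zero, if_neg (Nat.pos_iff_ne_zero.mp hn)]
        simp [tmul_apply, h0, Real.zero_rpow]
  rw [hcollapse, ← tsum_norm_cohFun_sq γ]
  refine tsum_congr fun m => ?_
  simp [cohFun_zero]

lemma inner_tmul_cross (α β : ℂ) :
    (inner ℂ (tmul (coh α) (coh 0)) (tmul (coh 0) (coh β)) : ℂ)
      = ((Real.exp (-(‖α‖ ^ 2 + ‖β‖ ^ 2) / 2) : ℝ) : ℂ) := by
  rw [lp.inner_eq_tsum]
  rw [tsum_eq_single ((0, 0) : ℕ × ℕ)]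
  · have ha : cohFun α 0 = ((Real.exp (-‖α‖ ^ 2 / 2) : ℝ) : ℂ) := cohFun_zero_apply α
    have hb : cohFun β 0 = ((Real.exp (-‖β‖ ^ 2 / 2) : ℝ) : ℂ) := cohFun_zero_apply β
    have h3 : cohFun 0 0 = 1 := by simp [cohFun]
    simp only [RCLike.inner_apply, tmul_apply, coh_apply, ha, hb, h3, mul_one, one_mul,
      Complex.conj_ofReal, ← Complex.ofReal_mul, ← Real.exp_add]
    rw [Complex.ofReal_inj, Real.exp_eq_exp]
    ring
  · intro q hq
    rcases q with ⟨n, m⟩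
    rcases Nat.eq_zero_or_pos n with hn | hn
    · rcases Nat.eq_zero_or_pos m with hm | hm
      · exact absurd (by simp [hn, hm]) hq
      · have h0 : cohFun 0 m = 0 := by
          rw [cohFun_zero, if_neg (Nat.pos_iff_ne_zero.mp hm)]
        simp [RCLike.inner_apply, h0]
    · have h0 : cohFun 0 n = 0 := by
        rw [cohFun_zero, if_neg (Nat.pos_iff_ne_zero.mp hn)]
      simp [RCLike.inner_apply, h0]

lemma norm_ecs_diff (α β : ℂ) :
    ‖tmul (coh α) (coh 0) - tmul (coh 0) (coh β)‖
      = Real.sqrt (2 * (1 - Real.exp (-(‖α‖ ^ 2 + ‖β‖ ^ 2) / 2))) := by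
  have h := @norm_sub_sq ℂ _ _ _ _ (tmul (coh α) (coh 0)) (tmul (coh 0) (coh β))
  rw [norm_tmul_coh_right, norm_tmul_coh_left, inner_tmul_cross] at h
  rw [← Real.sqrt_sq (norm_nonneg _), h]
  congr 1
  simp only [RCLike.re_to_complex, Complex.ofReal_re]
  ring

end Aux

/-- A two-mode displacement operator with parameters `(γ, δ)`: a linear isometric
equivalence of `ℓ²(ℕ×ℕ, ℂ)` acting on product coherent states in the prescribed way. -/
def IsTwoModeDisplacement
    (𝔻 : lp (fun _ : ℕ × ℕ => ℂ) 2 ≃ₗᵢ[ℂ] lp (fun _ : ℕ × ℕ => ℂ) 2) (γ δ : ℂ) : Prop :=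
  ∀ β β' : ℂ, 𝔻 (tmul (coh β) (coh β')) =
    Complex.exp ((γ * conj β - conj γ * β) / 2 + (δ * conj β' - conj δ * β') / 2) •
      tmul (coh (γ + β)) (coh (δ + β'))

/-- Theorem 3: a unit vector passing `Ω₁`, `Ω₂` and the displaced
odd-parity projection equals `ψ^{ECS(−)}_{α,β}` up to a phase. -/
theorem ecs_minus_verification (α β : ℂ) (hα : α ≠ 0) (hβ : β ≠ 0)
    (𝔻 : lp (fun _ : ℕ × ℕ => ℂ) 2 ≃ₗᵢ[ℂ] lp (fun _ : ℕ × ℕ => ℂ) 2)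
    (h𝔻 : IsTwoModeDisplacement 𝔻 (-α / 2) (-β / 2))
    (Ω₁ Ω₂ : lp (fun _ : ℕ × ℕ => ℂ) 2 →L[ℂ] lp (fun _ : ℕ × ℕ => ℂ) 2)
    (hΩ₁ : ∀ (φ : lp (fun _ : ℕ × ℕ => ℂ) 2) (n m : ℕ),
      (Ω₁ φ) (n, m) = if n = 0 ∨ m = 0 then φ (n, m) else 0)
    (hΩ₂ : ∀ (φ : lp (fun _ : ℕ × ℕ => ℂ) 2) (n m : ℕ),
      (Ω₂ φ) (n, m)
        = coh β m * (∑' k : ℕ, conj (coh β k) * φ (n, k))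
        + coh α n * (∑' k : ℕ, conj (coh α k) * φ (k, m))
        - coh α n * coh β m * (∑' k : ℕ, ∑' l : ℕ, conj (coh α k) * conj (coh β l) * φ (k, l)))
    (φ : lp (fun _ : ℕ × ℕ => ℂ) 2) (hnorm : ‖φ‖ = 1)
    (h1 : Ω₁ φ = φ) (h2 : Ω₂ φ = φ)
    (h3 : ∀ n m : ℕ, Even (n + m) → (𝔻 φ) (n, m) = 0) :
    ∃ c : ℂ, ‖c‖ = 1 ∧
      φ = c • (((Real.sqrt (2 * (1 - Real.exp (-(‖α‖ ^ 2 + ‖β‖ ^ 2) / 2))))⁻¹ : ℂ) •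
        (tmul (coh α) (coh 0) - tmul (coh 0) (coh β))) := by
  classical
  -- coordinates of φ
  have h2' : ∀ n m : ℕ, φ (n, m)
      = cohFun β m * (∑' k : ℕ, conj (cohFun β k) * φ (n, k))
      + cohFun α n * (∑' k : ℕ, conj (cohFun α k) * φ (k, m))
      - cohFun α n * cohFun β m *
          (∑' k : ℕ, ∑' l : ℕ, conj (cohFun α k) * conj (cohFun β l) * φ (k, l)) := by
    intro n m
    conv_lhs => rw [← h2]
    exact hΩ₂ φ n m
  obtain ⟨a, b, hab⟩ : ∃ a b : ℕ → ℂ, ∀ n m : ℕ,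
      φ (n, m) = a n * cohFun β m + cohFun α n * b m := by
    refine ⟨fun n => ∑' k : ℕ, conj (cohFun β k) * φ (n, k),
      fun m => (∑' k : ℕ, conj (cohFun α k) * φ (k, m))
        - (∑' k : ℕ, ∑' l : ℕ, conj (cohFun α k) * conj (cohFun β l) * φ (k, l)) * cohFun β m,
      fun n m => ?_⟩
    rw [h2' n m]; ring
  have hzero : ∀ n m : ℕ, n ≠ 0 → m ≠ 0 → φ (n, m) = 0 := by
    intro n m hn hm
    have h := hΩ₁ φ n m
    rw [h1, if_neg (by simp [hn, hm])] at h
    exact h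
  have hE : ∀ n m : ℕ, n ≠ 0 → m ≠ 0 → a n * cohFun β m + cohFun α n * b m = 0 :=
    fun n m hn hm => (hab n m).symm.trans (hzero n m hn hm)
  have hα1 : cohFun α 1 ≠ 0 := cohFun_ne_zero hα 1
  have hβ1 : cohFun β 1 ≠ 0 := cohFun_ne_zero hβ 1
  set lam : ℂ := a 1 / cohFun α 1 with hlam
  have ha : ∀ n : ℕ, n ≠ 0 → a n = lam * cohFun α n := by
    intro n hn
    have e1 := hE n 1 hn one_ne_zero
    have e2 := hE 1 1 one_ne_zero one_ne_zero
    have h' : (a n * cohFun α 1) * cohFun β 1 = (a 1 * cohFun α n) * cohFun β 1 := by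
      linear_combination cohFun α 1 * e1 - cohFun α n * e2
    have h'' := mul_right_cancel₀ hβ1 h'
    rw [hlam]
    field_simp
    linear_combination h''
  have hb : ∀ m : ℕ, m ≠ 0 → b m = -(lam * cohFun β m) := by
    intro m hm
    have e := hE 1 m one_ne_zero hm
    rw [hlam]
    field_simp
    linear_combination e
  obtain ⟨μ, ν, hmu, hnu⟩ : ∃ μ ν : ℂ,
      μ = lam * cohFun β 0 + b 0 ∧ ν = a 0 - lam * cohFun α 0 := ⟨_, _, rfl, rfl⟩
  have hdecomp : ∀ n m : ℕ,
      φ (n, m) = μ * (cohFun α n * cohFun 0 m) + ν * (cohFun 0 n * cohFun β m) := by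
    intro n m
    match n, m with
    | 0, 0 =>
      rw [hab 0 0, hmu, hnu]
      simp [cohFun_zero]
      try ring
    | 0, (m+1) =>
      rw [hab 0 (m+1), hb (m+1) (Nat.succ_ne_zero m), hnu]
      simp [cohFun_zero]
      try ring
    | (n+1), 0 =>
      rw [hab (n+1) 0, ha (n+1) (Nat.succ_ne_zero n), hmu]
      simp [cohFun_zero]
      try ring
    | (n+1), (m+1) =>
      rw [hzero (n+1) (m+1) (Nat.succ_ne_zero n) (Nat.succ_ne_zero m)]
      simp [cohFun_zero]
      try ring
  have hphi_eq : φ = μ • tmul (coh α) (coh 0) + ν • tmul (coh 0) (coh β) := by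
    apply lp.ext
    funext q
    obtain ⟨n, m⟩ := q
    have := hdecomp n m
    simp only [lp.coeFn_add, lp.coeFn_smul, Pi.add_apply, Pi.smul_apply, smul_eq_mul,
      tmul_apply, coh_apply]
    exact this
  -- apply the displacement operator
  have hDphi : 𝔻 φ = μ • 𝔻 (tmul (coh α) (coh 0)) + ν • 𝔻 (tmul (coh 0) (coh β)) := by
    rw [hphi_eq, map_add, map_smul, map_smul]
  rw [h𝔻 α 0, h𝔻 0 β] at hDphi
  have hexp1 : ((-α / 2) * conj α - conj (-α / 2) * α) / 2
      + ((-β / 2) * conj 0 - conj (-β / 2) * (0:ℂ)) / 2 = 0 := by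
    simp only [map_zero, mul_zero, zero_mul, sub_zero, zero_div, add_zero, map_neg, map_div₀,
      map_ofNat]
    ring
  have hexp2 : ((-α / 2) * conj 0 - conj (-α / 2) * (0:ℂ)) / 2
      + ((-β / 2) * conj β - conj (-β / 2) * β) / 2 = 0 := by
    simp only [map_zero, mul_zero, zero_mul, sub_zero, zero_div, zero_add, map_neg, map_div₀,
      map_ofNat]
    ring
  rw [hexp1, hexp2, Complex.exp_zero, one_smul, one_smul] at hDphi
  -- evaluate at (0,0)
  have h00 := h3 0 0 (by simp)
  rw [hDphi] at h00
  simp only [lp.coeFn_add, lp.coeFn_smul, Pi.add_apply, Pi.smul_apply, smul_eq_mul,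
    tmul_apply, coh_apply, cohFun_zero_apply] at h00
  rw [show (-α / 2 + α) = α / 2 from by ring, show (-β / 2 + 0 : ℂ) = -(β / 2) from by ring,
    show (-α / 2 + 0 : ℂ) = -(α / 2) from by ring, show (-β / 2 + β) = β / 2 from by ring,
    norm_neg, norm_neg] at h00
  have hKne : ((Real.exp (-‖α / 2‖ ^ 2 / 2) : ℝ) : ℂ) * ((Real.exp (-‖β / 2‖ ^ 2 / 2) : ℝ) : ℂ)
      ≠ 0 := by
    apply mul_ne_zero <;>
      · rw [Ne, Complex.ofReal_eq_zero]
        exact Real.exp_ne_zero _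
  have hsum : μ + ν = 0 := by
    rcases mul_eq_zero.mp (show (μ + ν) *
        (((Real.exp (-‖α / 2‖ ^ 2 / 2) : ℝ) : ℂ) * ((Real.exp (-‖β / 2‖ ^ 2 / 2) : ℝ) : ℂ)) = 0
      from by linear_combination h00) with h | h
    · exact h
    · exact absurd h hKne
  have hnu' : ν = -μ := by linear_combination hsum
  have hfinal : φ = μ • (tmul (coh α) (coh 0) - tmul (coh 0) (coh β)) := by
    rw [hphi_eq, hnu', neg_smul, ← sub_eq_add_neg, ← smul_sub]
  -- conclude
  rw [hfinal, norm_smul, norm_ecs_diff α β] at hnorm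
  set S : ℝ := Real.sqrt (2 * (1 - Real.exp (-(‖α‖ ^ 2 + ‖β‖ ^ 2) / 2))) with hS
  have hS0 : S ≠ 0 := by
    intro h
    rw [h, mul_zero] at hnorm
    exact zero_ne_one hnorm
  have hSC : ((S : ℝ) : ℂ) ≠ 0 := by rwa [Ne, Complex.ofReal_eq_zero]
  refine ⟨μ * (S : ℂ), ?_, ?_⟩
  · rw [norm_mul, Complex.norm_real, Real.norm_eq_abs, abs_of_nonneg (Real.sqrt_nonneg _)]
    exact hnorm
  · rw [hfinal, smul_smul, mul_assoc, mul_inv_cancel₀ hSC, mul_one]
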